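/- The dimension of the 2D local Bell space V_T = {v ∈ Q_k : ∂_n v|_e ∈ Q_{k−1}(e) for each edge e} equals (k+1)^2 − 4 for k ≥ 4. -/

import Mathlib

open MvPolynomial

noncomputable def phiB (k : ℕ) (m : Fin 2 → Polynomial ℝ) (j : Fin 2) :
    MvPolynomial (Fin 2) ℝ →ₗ[ℝ] ℝ :=
  (Polynomial.lcoeff ℝ k) ∘ₗ (aeval m).toLinearMap ∘ₗ (pderiv j).toLinearMap

lemma phiB_apply (k : ℕ) (m : Fin 2 → Polynomial ℝ) (j : Fin 2) (v : MvPolynomial (Fin 2) ℝ) :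
    phiB k m j v = (aeval m (pderiv j v)).coeff k := rfl

lemma phiB_monomial (k : ℕ) (m : Fin 2 → Polynomial ℝ) (j : Fin 2) (s : Fin 2 →₀ ℕ) (a : ℝ) :
    phiB k m j (monomial s a) =
      (a * (s j : ℝ)) *
        ((m 0 ^ ((s - Finsupp.single j 1 : Fin 2 →₀ ℕ) 0) *
          m 1 ^ ((s - Finsupp.single j 1 : Fin 2 →₀ ℕ) 1)).coeff k) := by
  rw [phiB_apply, pderiv_monomial, aeval_monomial,
    Finsupp.prod_fintype _ _ (fun i => pow_zero _), Fin.prod_univ_two]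
  rw [Polynomial.algebraMap_eq, Polynomial.coeff_C_mul]

lemma natDegree_phi_poly_le0 (c : ℝ) (j : Fin 2) (v : MvPolynomial (Fin 2) ℝ) {k : ℕ}
    (h : v.degreeOf 0 ≤ k) :
    (aeval ![Polynomial.X, Polynomial.C c] (pderiv j v)).natDegree ≤ k := by
  conv_lhs => rw [v.as_sum, map_sum, map_sum]
  refine Polynomial.natDegree_sum_le_of_forall_le _ _ ?_
  intro s hs
  rw [pderiv_monomial, aeval_monomial,
    Finsupp.prod_fintype _ _ (fun i => pow_zero _), Fin.prod_univ_two, Polynomial.algebraMap_eq]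
  have h0 : (s - Finsupp.single j 1 : Fin 2 →₀ ℕ) 0 ≤ k := by
    rw [Finsupp.tsub_apply]
    exact le_trans (Nat.sub_le _ _) (degreeOf_le_iff.mp h s hs)
  refine (Polynomial.natDegree_mul_le).trans ?_
  refine le_trans (add_le_add (Polynomial.natDegree_C _).le (Polynomial.natDegree_mul_le)) ?_
  simp only [Matrix.cons_val_zero, Matrix.cons_val_one, Matrix.head_cons, zero_add,
    Polynomial.natDegree_pow, Polynomial.natDegree_X, Polynomial.natDegree_C, mul_one, mul_zero,
    add_zero]
  exact h0

lemma natDegree_phi_poly_le1 (c : ℝ) (j : Fin 2) (v : MvPolynomial (Fin 2) ℝ) {k : ℕ}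
    (h : v.degreeOf 1 ≤ k) :
    (aeval ![Polynomial.C c, Polynomial.X] (pderiv j v)).natDegree ≤ k := by
  conv_lhs => rw [v.as_sum, map_sum, map_sum]
  refine Polynomial.natDegree_sum_le_of_forall_le _ _ ?_
  intro s hs
  rw [pderiv_monomial, aeval_monomial,
    Finsupp.prod_fintype _ _ (fun i => pow_zero _), Fin.prod_univ_two, Polynomial.algebraMap_eq]
  have h0 : (s - Finsupp.single j 1 : Fin 2 →₀ ℕ) 1 ≤ k := by
    rw [Finsupp.tsub_apply]
    exact le_trans (Nat.sub_le _ _) (degreeOf_le_iff.mp h s hs)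
  refine (Polynomial.natDegree_mul_le).trans ?_
  refine le_trans (add_le_add (Polynomial.natDegree_C _).le (Polynomial.natDegree_mul_le)) ?_
  simp only [Matrix.cons_val_zero, Matrix.cons_val_one, Matrix.head_cons, zero_add,
    Polynomial.natDegree_pow, Polynomial.natDegree_X, Polynomial.natDegree_C, mul_one, mul_zero,
    add_zero, zero_add]
  exact h0

noncomputable def PhiB (k : ℕ) : MvPolynomial (Fin 2) ℝ →ₗ[ℝ] (Fin 4 → ℝ) :=
  LinearMap.pi
    ![phiB k ![Polynomial.X, Polynomial.C 0] 1, phiB k ![Polynomial.X, Polynomial.C 1] 1,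
      phiB k ![Polynomial.C 0, Polynomial.X] 0, phiB k ![Polynomial.C 1, Polynomial.X] 0]

lemma natdeg_iff {k : ℕ} (hk : 1 ≤ k) (p : Polynomial ℝ) (hp : p.natDegree ≤ k) :
    p.natDegree ≤ k - 1 ↔ p.coeff k = 0 := by
  constructor
  · intro h; exact Polynomial.coeff_eq_zero_of_natDegree_lt (by omega)
  · intro h
    rw [Polynomial.natDegree_le_iff_coeff_eq_zero]
    intro N hN
    rcases eq_or_lt_of_le (show k ≤ N by omega) with rfl | hlt
    · exact h
    · exact Polynomial.coeff_eq_zero_of_natDegree_lt (by omega)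

lemma mem_rd {k : ℕ} (v : MvPolynomial (Fin 2) ℝ) :
    v ∈ restrictDegree (Fin 2) ℝ k ↔ v.degreeOf 0 ≤ k ∧ v.degreeOf 1 ≤ k := by
  rw [mem_restrictDegree]
  constructor
  · intro h
    exact ⟨degreeOf_le_iff.mpr fun m hm => h m hm 0, degreeOf_le_iff.mpr fun m hm => h m hm 1⟩
  · rintro ⟨h0, h1⟩ s hs i
    fin_cases i
    · exact degreeOf_le_iff.mp h0 s hs
    · exact degreeOf_le_iff.mp h1 s hs

lemma bell_set_eq (k : ℕ) (hk : 4 ≤ k) :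
    {v : MvPolynomial (Fin 2) ℝ |
        v.degreeOf 0 ≤ k ∧ v.degreeOf 1 ≤ k ∧
        (aeval ![Polynomial.X, Polynomial.C (0 : ℝ)] (pderiv 1 v)).natDegree ≤ k - 1 ∧
        (aeval ![Polynomial.X, Polynomial.C (1 : ℝ)] (pderiv 1 v)).natDegree ≤ k - 1 ∧
        (aeval ![Polynomial.C (0 : ℝ), Polynomial.X] (pderiv 0 v)).natDegree ≤ k - 1 ∧
        (aeval ![Polynomial.C (1 : ℝ), Polynomial.X] (pderiv 0 v)).natDegree ≤ k - 1} =
      ↑(restrictDegree (Fin 2) ℝ k ⊓ LinearMap.ker (PhiB k)) := by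
  ext v
  simp only [Set.mem_setOf_eq, SetLike.mem_coe, Submodule.mem_inf, LinearMap.mem_ker, mem_rd]
  have hPhi : PhiB k v = 0 ↔
      ((aeval ![Polynomial.X, Polynomial.C (0 : ℝ)] (pderiv 1 v)).coeff k = 0 ∧
       (aeval ![Polynomial.X, Polynomial.C (1 : ℝ)] (pderiv 1 v)).coeff k = 0 ∧
       (aeval ![Polynomial.C (0 : ℝ), Polynomial.X] (pderiv 0 v)).coeff k = 0 ∧
       (aeval ![Polynomial.C (1 : ℝ), Polynomial.X] (pderiv 0 v)).coeff k = 0) := by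
    rw [funext_iff]
    constructor
    · intro h
      exact ⟨h 0, h 1, h 2, h 3⟩
    · rintro ⟨h0, h1, h2, h3⟩ i
      match i with
      | 0 => exact h0
      | 1 => exact h1
      | 2 => exact h2
      | 3 => exact h3
  constructor
  · rintro ⟨h0, h1, c1, c2, c3, c4⟩
    refine ⟨⟨h0, h1⟩, hPhi.mpr ?_⟩
    exact ⟨(natdeg_iff (by omega) _ (natDegree_phi_poly_le0 _ _ _ h0)).mp c1,
      (natdeg_iff (by omega) _ (natDegree_phi_poly_le0 _ _ _ h0)).mp c2,
      (natdeg_iff (by omega) _ (natDegree_phi_poly_le1 _ _ _ h1)).mp c3,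
      (natdeg_iff (by omega) _ (natDegree_phi_poly_le1 _ _ _ h1)).mp c4⟩
  · rintro ⟨⟨h0, h1⟩, hker⟩
    obtain ⟨c1, c2, c3, c4⟩ := hPhi.mp hker
    exact ⟨h0, h1,
      (natdeg_iff (by omega) _ (natDegree_phi_poly_le0 _ _ _ h0)).mpr c1,
      (natdeg_iff (by omega) _ (natDegree_phi_poly_le0 _ _ _ h0)).mpr c2,
      (natdeg_iff (by omega) _ (natDegree_phi_poly_le1 _ _ _ h1)).mpr c3,
      (natdeg_iff (by omega) _ (natDegree_phi_poly_le1 _ _ _ h1)).mpr c4⟩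

noncomputable def rdEquiv (k : ℕ) :
    {n : Fin 2 →₀ ℕ | ∀ i, n i ≤ k} ≃ (Fin (k + 1) × Fin (k + 1)) where
  toFun n := (⟨n.1 0, Nat.lt_succ_of_le (n.2 0)⟩, ⟨n.1 1, Nat.lt_succ_of_le (n.2 1)⟩)
  invFun p := ⟨Finsupp.single 0 p.1.1 + Finsupp.single 1 p.2.1, by
    intro i
    fin_cases i <;> simp [Finsupp.single_apply] <;> omega⟩
  left_inv n := by
    apply Subtype.ext
    ext i
    fin_cases i <;> simp [Finsupp.single_apply]
  right_inv p := by
    ext <;> simp [Finsupp.single_apply]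

lemma finrank_rd (k : ℕ) :
    Module.finrank ℝ (restrictDegree (Fin 2) ℝ k) = (k + 1) ^ 2 := by
  letI : Fintype {n : Fin 2 →₀ ℕ | ∀ i, n i ≤ k} := Fintype.ofEquiv _ (rdEquiv k).symm
  rw [restrictDegree, Module.finrank_eq_card_basis (basisRestrictSupport ℝ _),
    Fintype.card_congr (rdEquiv k)]
  simp [sq]

lemma mem_rd_mono {k : ℕ} (a b : ℕ) (ha : a ≤ k) (hb : b ≤ k) :
    (monomial (Finsupp.single 0 a + Finsupp.single 1 b) (1 : ℝ)) ∈ restrictDegree (Fin 2) ℝ k := by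
  rw [mem_restrictDegree]
  intro s hs i
  rw [support_monomial, if_neg one_ne_zero, Finset.mem_singleton] at hs
  subst hs
  fin_cases i <;> simp [Finsupp.single_apply] <;> omega

lemma PhiB_v1 (k : ℕ) (hk : 4 ≤ k) :
    PhiB k (monomial (Finsupp.single 0 k + Finsupp.single 1 1) (1 : ℝ)) = ![1, 1, 0, 0] := by
  funext i
  fin_cases i <;>
    simp [PhiB, phiB_monomial, Finsupp.tsub_apply, Finsupp.single_apply,
      Polynomial.coeff_X_pow, Polynomial.coeff_X, Polynomial.coeff_one,
      zero_pow (show k ≠ 0 by omega), zero_pow (show k - 1 ≠ 0 by omega)] <;>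
    omega

lemma PhiB_v2 (k : ℕ) (hk : 4 ≤ k) :
    PhiB k (monomial (Finsupp.single 0 k + Finsupp.single 1 2) (1 : ℝ)) = ![0, 2, 0, 0] := by
  funext i
  fin_cases i <;>
    simp [PhiB, phiB_monomial, Finsupp.tsub_apply, Finsupp.single_apply,
      Polynomial.coeff_X_pow, Polynomial.coeff_X, Polynomial.coeff_one,
      zero_pow (show k ≠ 0 by omega), zero_pow (show k - 1 ≠ 0 by omega)] <;>
    omega

lemma PhiB_v3 (k : ℕ) (hk : 4 ≤ k) :
    PhiB k (monomial (Finsupp.single 0 1 + Finsupp.single 1 k) (1 : ℝ)) = ![0, 0, 1, 1] := by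
  funext i
  fin_cases i <;>
    simp [PhiB, phiB_monomial, Finsupp.tsub_apply, Finsupp.single_apply,
      Polynomial.coeff_X_pow, Polynomial.coeff_X, Polynomial.coeff_one,
      zero_pow (show k ≠ 0 by omega), zero_pow (show k - 1 ≠ 0 by omega)] <;>
    omega

lemma PhiB_v4 (k : ℕ) (hk : 4 ≤ k) :
    PhiB k (monomial (Finsupp.single 0 2 + Finsupp.single 1 k) (1 : ℝ)) = ![0, 0, 0, 2] := by
  funext i
  fin_cases i <;>
    simp [PhiB, phiB_monomial, Finsupp.tsub_apply, Finsupp.single_apply,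
      Polynomial.coeff_X_pow, Polynomial.coeff_X, Polynomial.coeff_one,
      zero_pow (show k ≠ 0 by omega), zero_pow (show k - 1 ≠ 0 by omega)] <;>
    omega

lemma PhiB_range_top (k : ℕ) (hk : 4 ≤ k) :
    LinearMap.range ((PhiB k).comp (restrictDegree (Fin 2) ℝ k).subtype) = ⊤ := by
  have h1 : (![1, 1, 0, 0] : Fin 4 → ℝ) ∈
      LinearMap.range ((PhiB k).comp (restrictDegree (Fin 2) ℝ k).subtype) :=
    ⟨⟨_, mem_rd_mono k 1 le_rfl (by omega)⟩, PhiB_v1 k hk⟩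
  have h2 : (![0, 2, 0, 0] : Fin 4 → ℝ) ∈
      LinearMap.range ((PhiB k).comp (restrictDegree (Fin 2) ℝ k).subtype) :=
    ⟨⟨_, mem_rd_mono k 2 le_rfl (by omega)⟩, PhiB_v2 k hk⟩
  have h3 : (![0, 0, 1, 1] : Fin 4 → ℝ) ∈
      LinearMap.range ((PhiB k).comp (restrictDegree (Fin 2) ℝ k).subtype) :=
    ⟨⟨_, mem_rd_mono 1 k (by omega) le_rfl⟩, PhiB_v3 k hk⟩
  have h4 : (![0, 0, 0, 2] : Fin 4 → ℝ) ∈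
      LinearMap.range ((PhiB k).comp (restrictDegree (Fin 2) ℝ k).subtype) :=
    ⟨⟨_, mem_rd_mono 2 k (by omega) le_rfl⟩, PhiB_v4 k hk⟩
  have hs : ∀ i : Fin 4, Pi.single i (1 : ℝ) ∈
      LinearMap.range ((PhiB k).comp (restrictDegree (Fin 2) ℝ k).subtype) := by
    intro i
    fin_cases i
    · show Pi.single (0 : Fin 4) (1 : ℝ) ∈ LinearMap.range ((PhiB k).comp (restrictDegree (Fin 2) ℝ k).subtype)
      have e : Pi.single (0 : Fin 4) (1 : ℝ)
          = (![1, 1, 0, 0] : Fin 4 → ℝ) - (2⁻¹ : ℝ) • (![0, 2, 0, 0] : Fin 4 → ℝ) := by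
        funext j; fin_cases j <;> simp [Pi.single_apply] <;> norm_num
      rw [e]; exact sub_mem h1 (Submodule.smul_mem _ _ h2)
    · show Pi.single (1 : Fin 4) (1 : ℝ) ∈ LinearMap.range ((PhiB k).comp (restrictDegree (Fin 2) ℝ k).subtype)
      have e : Pi.single (1 : Fin 4) (1 : ℝ) = (2⁻¹ : ℝ) • (![0, 2, 0, 0] : Fin 4 → ℝ) := by
        funext j; fin_cases j <;> simp [Pi.single_apply] <;> norm_num
      rw [e]; exact Submodule.smul_mem _ _ h2
    · show Pi.single (2 : Fin 4) (1 : ℝ) ∈ LinearMap.range ((PhiB k).comp (restrictDegree (Fin 2) ℝ k).subtype)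
      have e : Pi.single (2 : Fin 4) (1 : ℝ)
          = (![0, 0, 1, 1] : Fin 4 → ℝ) - (2⁻¹ : ℝ) • (![0, 0, 0, 2] : Fin 4 → ℝ) := by
        funext j; fin_cases j <;> simp [Pi.single_apply] <;> norm_num
      rw [e]; exact sub_mem h3 (Submodule.smul_mem _ _ h4)
    · show Pi.single (3 : Fin 4) (1 : ℝ) ∈ LinearMap.range ((PhiB k).comp (restrictDegree (Fin 2) ℝ k).subtype)
      have e : Pi.single (3 : Fin 4) (1 : ℝ) = (2⁻¹ : ℝ) • (![0, 0, 0, 2] : Fin 4 → ℝ) := by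
        funext j; fin_cases j <;> simp [Pi.single_apply] <;> norm_num
      rw [e]; exact Submodule.smul_mem _ _ h4
  rw [eq_top_iff, ← (Pi.basisFun ℝ (Fin 4)).span_eq, Submodule.span_le]
  rintro x ⟨i, rfl⟩
  rw [Pi.basisFun_apply]
  exact hs i

/-- The dimension of the 2D local Bell space
`V_T = {v ∈ Q_k : ∂_n v|_e ∈ Q_{k−1}(e)` for each edge `e` of `[0,1]²}`
equals `(k+1)² − 4` for `k ≥ 4`. -/
theorem bell_space_dim (k : ℕ) (hk : 4 ≤ k) :
    Module.finrank ℝ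
      ↥(Submodule.span ℝ
        {v : MvPolynomial (Fin 2) ℝ |
          v.degreeOf 0 ≤ k ∧ v.degreeOf 1 ≤ k ∧
          (aeval ![Polynomial.X, Polynomial.C (0 : ℝ)] (pderiv 1 v)).natDegree ≤ k - 1 ∧
          (aeval ![Polynomial.X, Polynomial.C (1 : ℝ)] (pderiv 1 v)).natDegree ≤ k - 1 ∧
          (aeval ![Polynomial.C (0 : ℝ), Polynomial.X] (pderiv 0 v)).natDegree ≤ k - 1 ∧
          (aeval ![Polynomial.C (1 : ℝ), Polynomial.X] (pderiv 0 v)).natDegree ≤ k - 1}) =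
      (k + 1) ^ 2 - 4 := by
  rw [bell_set_eq k hk, Submodule.span_eq]
  have h5 := LinearMap.finrank_range_add_finrank_ker
    ((PhiB k).comp (restrictDegree (Fin 2) ℝ k).subtype)
  rw [PhiB_range_top k hk, finrank_top] at h5
  have hr4 : Module.finrank ℝ (Fin 4 → ℝ) = 4 := by simp
  have hQ := finrank_rd k
  have hmap : restrictDegree (Fin 2) ℝ k ⊓ LinearMap.ker (PhiB k) =
      Submodule.map (restrictDegree (Fin 2) ℝ k).subtype
        (LinearMap.ker ((PhiB k).comp (restrictDegree (Fin 2) ℝ k).subtype)) := by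
    rw [LinearMap.ker_comp, Submodule.map_comap_subtype]
  rw [hmap, Submodule.finrank_map_subtype_eq]
  rw [hr4, hQ] at h5
  generalize (k + 1) ^ 2 = N at h5 ⊢
  omega
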